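/- Let $X$ be a Banach lattice and $P\colon X\to X$ a strictly positive projection (i.e., $x>0$ implies $Px>0$). If the only closed ideals of $X$ invariant under $P$ are $\{0\}$ and $X$, then the range of $P$ is one-dimensional. -/

import Mathlib

open Filter

section Aux

variable {X : Type*} [NormedAddCommGroup X] [Lattice X] [HasSolidNorm X]
    [IsOrderedAddMonoid X]

lemma aux_inf_add_le {a b c : X} (ha : 0 ≤ a) (hb : 0 ≤ b) (hc : 0 ≤ c) :
    (a + b) ⊓ c ≤ a ⊓ c + b ⊓ c := by
  have h : a ⊓ c + b ⊓ c = ((a + b) ⊓ (c + b)) ⊓ ((a + c) ⊓ (c + c)) := by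
    rw [add_inf, inf_add, inf_add]
  rw [h]
  refine le_inf (le_inf inf_le_left ?_) (le_inf ?_ ?_)
  · exact inf_le_right.trans (le_add_of_nonneg_right hb)
  · exact inf_le_right.trans (le_add_of_nonneg_left ha)
  · exact inf_le_right.trans (le_add_of_nonneg_left hc)

lemma aux_add_disj {a b c : X} (ha : 0 ≤ a) (hb : 0 ≤ b) (hc : 0 ≤ c)
    (h1 : a ⊓ c = 0) (h2 : b ⊓ c = 0) : (a + b) ⊓ c = 0 :=
  le_antisymm (by simpa [h1, h2] using aux_inf_add_le ha hb hc)
    (le_inf (add_nonneg ha hb) hc)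

lemma aux_nsmul_disj {a c : X} (ha : 0 ≤ a) (hc : 0 ≤ c)
    (h1 : a ⊓ c = 0) : ∀ n : ℕ, (n • a) ⊓ c = 0 := by
  intro n
  induction n with
  | zero => simpa using hc
  | succ n ih =>
    rw [succ_nsmul]
    exact aux_add_disj (nsmul_nonneg ha n) ha hc ih h1

lemma aux_nsmul_cancel {y : X} {n : ℕ} (hn : 0 < n) (h : 0 ≤ n • y) : 0 ≤ y := by
  have hd : y⁺ ⊓ y⁻ = 0 := posPart_inf_negPart_eq_zero y
  have s1 : (n • y⁺) ⊓ y⁻ = 0 :=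
    aux_nsmul_disj (posPart_nonneg y) (negPart_nonneg y) hd n
  have s2 : (n • y⁻) ⊓ (n • y⁺) = 0 :=
    aux_nsmul_disj (negPart_nonneg y) (nsmul_nonneg (posPart_nonneg y) n)
      ((inf_comm _ _).trans s1) n
  have hle : n • y⁻ ≤ n • y⁺ := by
    have hsub : n • y⁺ - n • y⁻ = n • y := by rw [← smul_sub, posPart_sub_negPart]
    exact sub_nonneg.mp (hsub ▸ h)
  have hz : n • y⁻ = 0 :=
    le_antisymm (le_of_le_of_eq (le_inf le_rfl hle) s2)
      (nsmul_nonneg (negPart_nonneg y) n)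
  have hy : y⁻ = 0 := by
    have h1 : y⁻ ≤ n • y⁻ := by
      simpa using nsmul_le_nsmul_left (negPart_nonneg y) hn
    exact le_antisymm (hz ▸ h1) (negPart_nonneg y)
  exact negPart_eq_zero.mp hy

variable [NormedSpace ℝ X]

lemma aux_smul_nonneg {c : ℝ} {x : X} (hc : 0 ≤ c) (hx : 0 ≤ x) : 0 ≤ c • x := by
  have key : ∀ n : ℕ, 0 < n → 0 ≤ ((⌊c * n⌋₊ : ℝ) / (n : ℝ)) • x := by
    intro n hn
    have hinv : 0 ≤ ((n : ℝ)⁻¹) • x := by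
      apply aux_nsmul_cancel hn
      rw [← Nat.cast_smul_eq_nsmul ℝ, smul_smul,
        mul_inv_cancel₀ (by exact_mod_cast hn.ne' : (n:ℝ) ≠ 0), one_smul]
      exact hx
    have h : ((⌊c * n⌋₊ : ℝ) / (n : ℝ)) • x = ⌊c * n⌋₊ • (((n : ℝ)⁻¹) • x) := by
      rw [← Nat.cast_smul_eq_nsmul ℝ, smul_smul, div_eq_mul_inv]
    rw [h]
    exact nsmul_nonneg hinv _
  have htend : Tendsto (fun n : ℕ => ((⌊c * n⌋₊ : ℝ) / (n : ℝ)) • x)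
      atTop (nhds (c • x)) :=
    ((tendsto_nat_floor_mul_div_atTop hc).comp tendsto_natCast_atTop_atTop).smul_const x
  exact ge_of_tendsto htend (eventually_atTop.mpr ⟨1, fun n hn => key n hn⟩)

lemma aux_smul_le_smul {c : ℝ} {x y : X} (hc : 0 ≤ c) (h : x ≤ y) : c • x ≤ c • y := by
  have h2 := aux_smul_nonneg hc (sub_nonneg.mpr h)
  rw [smul_sub] at h2
  exact sub_nonneg.mp h2

lemma aux_smul_le_smul' {s t : ℝ} {x : X} (h : s ≤ t) (hx : 0 ≤ x) : s • x ≤ t • x := by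
  have h2 := aux_smul_nonneg (sub_nonneg.mpr h) hx
  rw [sub_smul] at h2
  exact sub_nonneg.mp h2

lemma aux_smul_le_abs (d : ℝ) (x : X) : d • x ≤ |d| • |x| := by
  rcases le_or_gt 0 d with h | h
  · rw [abs_of_nonneg h]
    have h2 := aux_smul_nonneg h (sub_nonneg.mpr (le_abs_self x))
    rw [smul_sub] at h2
    exact sub_nonneg.mp h2
  · rw [abs_of_neg h]
    have h0 : (0:X) ≤ |x| + x := by
      rw [add_comm, add_abs_eq_two_nsmul_posPart]
      exact nsmul_nonneg (posPart_nonneg x) 2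
    have h2 := aux_smul_nonneg (neg_nonneg.mpr h.le) h0
    rw [smul_add] at h2
    have h3 : (0:X) ≤ (-d) • |x| - d • x := by simpa [neg_smul] using h2
    exact sub_nonneg.mp h3

lemma aux_abs_smul_le (c : ℝ) (x : X) : |c • x| ≤ |c| • |x| := by
  rw [abs_le']
  refine ⟨aux_smul_le_abs c x, ?_⟩
  have h := aux_smul_le_abs (-c) x
  rwa [neg_smul, abs_neg] at h

variable (P : X →ₗ[ℝ] X)

lemma aux_abs_P (hpos : ∀ x : X, 0 ≤ x → 0 ≤ P x) (x : X) : |P x| ≤ P |x| := by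
  have h1 : P x ≤ P |x| := by
    have h := hpos _ (sub_nonneg.mpr (le_abs_self x))
    rw [map_sub] at h
    exact sub_nonneg.mp h
  have h2 : -(P x) ≤ P |x| := by
    have h0 : (0:X) ≤ |x| + x := by
      rw [add_comm, add_abs_eq_two_nsmul_posPart]
      exact nsmul_nonneg (posPart_nonneg x) 2
    have h := hpos _ h0
    rw [map_add] at h
    have h3 : (0:X) ≤ P |x| - -(P x) := by rwa [sub_neg_eq_add]
    exact sub_nonneg.mp h3
  exact abs_le'.mpr ⟨h1, h2⟩

lemma aux_P_cont [CompleteSpace X] (hpos : ∀ x : X, 0 ≤ x → 0 ≤ P x) :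
    Continuous P := by
  have habs : ∀ x : X, |P x| ≤ P |x| := aux_abs_P P hpos
  have hcone : ∃ C : ℝ, ∀ x : X, 0 ≤ x → ‖P x‖ ≤ C * ‖x‖ := by
    by_contra hC
    push_neg at hC
    have key : ∀ n : ℕ, ∃ x : X, 0 ≤ x ∧ (n * 2^n : ℝ) * ‖x‖ < ‖P x‖ := fun n => hC _
    choose w hw0 hwlt using key
    have hwne : ∀ n, w n ≠ 0 := by
      intro n hn
      have h := hwlt n
      rw [hn] at h
      simp at h
    set z : ℕ → X := fun n => ((1/2 : ℝ)^n * ‖w n‖⁻¹) • w n with hz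
    have hznorm : ∀ n, ‖z n‖ = (1/2 : ℝ)^n := by
      intro n
      have hnw : ‖w n‖ ≠ 0 := norm_ne_zero_iff.mpr (hwne n)
      rw [hz]
      simp only [norm_smul, Real.norm_eq_abs]
      rw [abs_of_nonneg (by positivity)]
      field_simp
    have hzpos : ∀ n, 0 ≤ z n := fun n => aux_smul_nonneg (by positivity) (hw0 n)
    have hsum : Summable z := by
      apply Summable.of_norm
      simp only [hznorm]
      exact summable_geometric_of_lt_one (by norm_num) (by norm_num)
    set S := ∑' n, z n with hS
    have hle : ∀ n, z n ≤ S := fun n => Summable.le_tsum hsum n (fun m _ => hzpos m)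
    have hPbig : ∀ n : ℕ, (n : ℝ) < ‖P S‖ := by
      intro n
      have h1 : (n : ℝ) < ‖P (z n)‖ := by
        have hzn : P (z n) = ((1/2 : ℝ)^n * ‖w n‖⁻¹) • P (w n) := by rw [hz]; simp
        rw [hzn, norm_smul, Real.norm_eq_abs, abs_of_nonneg (by positivity)]
        have hw := hwlt n
        have hnw : 0 < ‖w n‖ := norm_pos_iff.mpr (hwne n)
        have heq : (n:ℝ) = ((1/2:ℝ)^n * ‖w n‖⁻¹) * ((n * 2^n) * ‖w n‖) := by
          field_simp
          rw [mul_assoc, ← mul_pow]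
          norm_num
        rw [heq]
        have hpos' : (0:ℝ) < (1/2:ℝ)^n * ‖w n‖⁻¹ := by positivity
        exact mul_lt_mul_of_pos_left hw hpos'
      have h2 : ‖P (z n)‖ ≤ ‖P S‖ := by
        apply HasSolidNorm.solid
        rw [abs_of_nonneg (hpos _ (hzpos n)), abs_of_nonneg (hpos _ (tsum_nonneg hzpos))]
        have h3 := hpos _ (sub_nonneg.mpr (hle n))
        rw [map_sub] at h3
        exact sub_nonneg.mp h3
      linarith
    obtain ⟨n, hn⟩ := exists_nat_gt ‖P S‖
    exact absurd (hPbig n) (by linarith)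
  obtain ⟨C, hCb⟩ := hcone
  apply AddMonoidHomClass.continuous_of_bound P C
  intro x
  calc ‖P x‖ = ‖|P x|‖ := (norm_abs_eq_norm _).symm
    _ ≤ ‖P |x|‖ := by
        apply HasSolidNorm.solid
        rw [abs_abs, abs_of_nonneg (hpos _ (abs_nonneg x))]
        exact habs x
    _ ≤ C * ‖|x|‖ := hCb _ (abs_nonneg x)
    _ = C * ‖x‖ := by rw [norm_abs_eq_norm]

end Aux

/-- A strictly positive projection on a (non-zero) Banach lattice whose only
invariant closed ideals are `{0}` and `X` has one-dimensional range. -/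
theorem stmt3 {X : Type*} [NormedAddCommGroup X] [Lattice X] [HasSolidNorm X]
    [IsOrderedAddMonoid X] [NormedSpace ℝ X]
    [CompleteSpace X] [Nontrivial X]
    (P : X →ₗ[ℝ] X) (hproj : ∀ x, P (P x) = P x)
    (hstrict : ∀ x : X, 0 < x → 0 < P x)
    (htriv : ∀ I : Submodule ℝ X,
      (∀ x y : X, |x| ≤ |y| → y ∈ I → x ∈ I) →
      IsClosed (I : Set X) → (∀ x ∈ I, P x ∈ I) → I = ⊥ ∨ I = ⊤) :
    Module.rank ℝ (LinearMap.range P) = 1 := by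
  -- positivity and monotonicity of `P`
  have hpos : ∀ x : X, 0 ≤ x → 0 ≤ P x := by
    intro x hx
    rcases hx.eq_or_lt with h | h
    · rw [← h, map_zero]
    · exact (hstrict x h).le
  have hmono : ∀ x y : X, x ≤ y → P x ≤ P y := by
    intro x y h
    have h2 := hpos _ (sub_nonneg.mpr h)
    rw [map_sub] at h2
    exact sub_nonneg.mp h2
  have habs : ∀ x : X, |P x| ≤ P |x| := aux_abs_P P hpos
  have hcont : Continuous P := aux_P_cont P hpos
  -- the range of `P` is a sublattice: `P` fixes `|y|` whenever it fixes `y`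
  have hrabs : ∀ y : X, P y = y → P |y| = |y| := by
    intro y hy
    have hd0 : 0 ≤ P |y| - |y| := by
      have := habs y
      rw [hy] at this
      exact sub_nonneg.mpr this
    have hPd : P (P |y| - |y|) = 0 := by
      rw [map_sub, hproj, sub_self]
    rcases hd0.eq_or_lt with h | h
    · exact sub_eq_zero.mp h.symm
    · exfalso
      have h2 := hstrict _ h
      rw [hPd] at h2
      exact lt_irrefl 0 h2
  -- two nonzero positive fixed points of `P` cannot be disjoint
  have hnd : ∀ a b : X, P a = a → P b = b → 0 < a → 0 < b → a ⊓ b = 0 → False := by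
    intro a b ha hb ha0 hb0 hd
    let I : Submodule ℝ X :=
      { carrier := {x | P |x| ⊓ b = 0}
        zero_mem' := by
          simp only [Set.mem_setOf_eq, abs_zero, map_zero]
          exact inf_eq_left.mpr hb0.le
        add_mem' := by
          intro x y hx hy
          simp only [Set.mem_setOf_eq] at hx hy ⊢
          have h1 : P |x + y| ≤ P |x| + P |y| := by
            have := hmono _ _ (abs_add_le x y)
            rwa [map_add] at this
          have h2 : (P |x| + P |y|) ⊓ b = 0 :=
            aux_add_disj (hpos _ (abs_nonneg x)) (hpos _ (abs_nonneg y)) hb0.le hx hy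
          refine le_antisymm ?_ (le_inf (hpos _ (abs_nonneg _)) hb0.le)
          calc P |x + y| ⊓ b ≤ (P |x| + P |y|) ⊓ b := inf_le_inf_right _ h1
            _ = 0 := h2
        smul_mem' := by
          intro c x hx
          simp only [Set.mem_setOf_eq] at hx ⊢
          set n : ℕ := ⌈|c|⌉₊ with hn
          have h1 : P |c • x| ≤ n • P |x| := by
            have ha1 : |c • x| ≤ |c| • |x| := aux_abs_smul_le c x
            have h2 := hmono _ _ ha1
            have h3 : P (|c| • |x|) = |c| • P |x| := map_smul P _ _
            have h4 : |c| • P |x| ≤ (n : ℝ) • P |x| :=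
              aux_smul_le_smul' (Nat.le_ceil _) (hpos _ (abs_nonneg x))
            rw [Nat.cast_smul_eq_nsmul] at h4
            calc P |c • x| ≤ P (|c| • |x|) := h2
              _ = |c| • P |x| := h3
              _ ≤ n • P |x| := h4
          have h2 : (n • P |x|) ⊓ b = 0 :=
            aux_nsmul_disj (hpos _ (abs_nonneg x)) hb0.le hx n
          refine le_antisymm ?_ (le_inf (hpos _ (abs_nonneg _)) hb0.le)
          calc P |c • x| ⊓ b ≤ (n • P |x|) ⊓ b := inf_le_inf_right _ h1
            _ = 0 := h2 }
    have hmem : ∀ x : X, x ∈ I ↔ P |x| ⊓ b = 0 := fun _ => Iff.rfl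
    have hIdeal : ∀ x y : X, |x| ≤ |y| → y ∈ I → x ∈ I := by
      intro x y hxy hy
      rw [hmem] at hy ⊢
      refine le_antisymm ?_ (le_inf (hpos _ (abs_nonneg _)) hb0.le)
      calc P |x| ⊓ b ≤ P |y| ⊓ b := inf_le_inf_right _ (hmono _ _ hxy)
        _ = 0 := hy
    have hIclosed : IsClosed (I : Set X) := by
      have habs_cont : Continuous fun x : X => |x| :=
        continuous_id.sup continuous_neg
      have hfc : Continuous fun x : X => P |x| ⊓ b :=
        (hcont.comp habs_cont).inf continuous_const
      have : (I : Set X) = (fun x : X => P |x| ⊓ b) ⁻¹' {0} := rfl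
      rw [this]
      exact IsClosed.preimage hfc isClosed_singleton
    have hIinv : ∀ x ∈ I, P x ∈ I := by
      intro x hx
      rw [hmem] at hx ⊢
      have h1 : P |P x| ≤ P |x| := by
        have := hmono _ _ (habs x)
        rwa [hproj] at this
      refine le_antisymm ?_ (le_inf (hpos _ (abs_nonneg _)) hb0.le)
      calc P |P x| ⊓ b ≤ P |x| ⊓ b := inf_le_inf_right _ h1
        _ = 0 := hx
    have haI : a ∈ I := by
      rw [hmem, abs_of_nonneg ha0.le, ha]
      exact hd
    have hbI : b ∉ I := by
      rw [hmem, abs_of_nonneg hb0.le, hb, inf_idem]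
      exact hb0.ne'
    rcases htriv I hIdeal hIclosed hIinv with h | h
    · rw [h, Submodule.mem_bot] at haI
      exact ha0.ne' haI
    · exact hbI (h ▸ Submodule.mem_top)
  -- elements fixed by `P` are comparable to `0`
  have hfixabs : ∀ y : X, P y = y → P y⁺ = y⁺ ∧ P y⁻ = y⁻ := by
    intro y hy
    have h2 : y + |y| = 2 • y⁺ := add_abs_eq_two_nsmul_posPart y
    have hppart : y⁺ = (2⁻¹ : ℝ) • (y + |y|) := by
      rw [h2, ← Nat.cast_smul_eq_nsmul ℝ, smul_smul]
      norm_num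
    have hP1 : P y⁺ = y⁺ := by
      rw [hppart, map_smul, map_add, hy, hrabs y hy]
    refine ⟨hP1, ?_⟩
    have hnpart : y⁻ = y⁺ - y := by
      have h := posPart_sub_negPart y
      have h3 : y⁻ + y = y⁺ := by rw [add_comm]; exact (sub_eq_iff_eq_add.mp h).symm
      exact eq_sub_of_add_eq h3
    rw [hnpart, map_sub, hP1, hy]
  have htotal : ∀ y : X, P y = y → 0 ≤ y ∨ y ≤ 0 := by
    intro y hy
    obtain ⟨hP1, hP2⟩ := hfixabs y hy
    by_contra hcon
    push_neg at hcon
    have hyp : 0 < y⁺ := (posPart_nonneg y).lt_of_ne (by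
      intro h
      exact hcon.2 (posPart_eq_zero.mp h.symm))
    have hyn : 0 < y⁻ := (negPart_nonneg y).lt_of_ne (by
      intro h
      exact hcon.1 (negPart_eq_zero.mp h.symm))
    exact hnd _ _ hP1 hP2 hyp hyn (posPart_inf_negPart_eq_zero y)
  -- a positive fixed vector
  obtain ⟨x₀, hx₀⟩ := exists_ne (0 : X)
  set u : X := P |x₀| with hu
  have hu0 : 0 < u := hstrict _ ((abs_nonneg x₀).lt_of_ne fun h => hx₀ (by
    have h1 : x₀ ≤ 0 := (le_abs_self x₀).trans h.symm.le
    have h2 : -x₀ ≤ 0 := (neg_le_abs x₀).trans h.symm.le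
    exact le_antisymm h1 (by simpa using h2)))
  have hPu : P u = u := hproj _
  -- every nonnegative fixed point of `P` is a multiple of `u`
  have hscal : ∀ w : X, P w = w → 0 ≤ w → ∃ c : ℝ, w = c • u := by
    intro w hw hw0
    set s : Set ℝ := {t : ℝ | t • u ≤ w} with hs
    have h0s : (0:ℝ) ∈ s := by
      simp only [hs, Set.mem_setOf_eq, zero_smul]
      exact hw0
    have hsne : s.Nonempty := ⟨0, h0s⟩
    have hsbdd : BddAbove s := by
      by_contra hb
      have hbig : ∀ n : ℕ, 1 ≤ n → u ≤ (n : ℝ)⁻¹ • w := by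
        intro n hn
        obtain ⟨t, hts, hnt⟩ := not_bddAbove_iff.mp hb (n : ℝ)
        have h1 : (n : ℝ) • u ≤ w := le_trans (aux_smul_le_smul' hnt.le hu0.le) hts
        have h2 := aux_smul_le_smul (c := (n:ℝ)⁻¹) (by positivity) h1
        rwa [smul_smul, inv_mul_cancel₀
          (by exact_mod_cast (Nat.pos_of_ne_zero (by omega)).ne' : (n:ℝ) ≠ 0),
          one_smul] at h2
      have htend : Filter.Tendsto (fun n : ℕ => (n : ℝ)⁻¹ • w) Filter.atTop (nhds 0) := by
        have := (tendsto_inv_atTop_nhds_zero_nat :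
          Filter.Tendsto (fun n : ℕ => (n : ℝ)⁻¹) Filter.atTop (nhds 0)).smul_const w
        rwa [zero_smul] at this
      have hle := ge_of_tendsto htend (Filter.eventually_atTop.mpr ⟨1, hbig⟩)
      exact absurd hle hu0.not_ge
    set c := sSup s with hc
    have hcs : c ∈ s := by
      have hclosed : IsClosed s := by
        have hseq : s = (fun t : ℝ => t • u) ⁻¹' {x : X | x ≤ w} := rfl
        rw [hseq]
        exact IsClosed.preimage (continuous_id.smul continuous_const)
          (isClosed_le continuous_id continuous_const)
      exact hclosed.csSup_mem hsne hsbdd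
    have hd0 : 0 ≤ w - c • u := sub_nonneg.mpr hcs
    have hPfix : ∀ t : ℝ, P (w - t • u) = w - t • u := by
      intro t
      rw [map_sub, map_smul, hw, hPu]
    have hupper : ∀ ε : ℝ, 0 < ε → w - c • u ≤ ε • u := by
      intro ε hε
      have hnotin : c + ε ∉ s := fun hin =>
        (not_lt.mpr (le_csSup hsbdd hin)) (lt_add_of_pos_right c hε)
      rcases htotal _ (hPfix (c + ε)) with h | h
      · exact absurd (sub_nonneg.mp h) hnotin
      · have h2 : w ≤ (c + ε) • u := sub_nonpos.mp h
        rw [add_smul] at h2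
        have h3 := sub_le_sub_right h2 (c • u)
        simpa using h3
    have hle0 : w - c • u ≤ 0 := by
      have htend : Filter.Tendsto (fun n : ℕ => ((n : ℝ) + 1)⁻¹ • u)
          Filter.atTop (nhds 0) := by
        have h1 : Filter.Tendsto (fun n : ℕ => ((n : ℝ) + 1)⁻¹) Filter.atTop (nhds 0) :=
          tendsto_one_div_add_atTop_nhds_zero_nat.congr (by intro n; rw [one_div])
        have := h1.smul_const u
        rwa [zero_smul] at this
      exact ge_of_tendsto htend (Filter.Eventually.of_forall fun n =>
        hupper _ (by positivity))
    exact ⟨c, sub_eq_zero.mp (le_antisymm hle0 hd0)⟩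
  -- the range is the span of `u`
  have hrange : LinearMap.range P = Submodule.span ℝ {u} := by
    apply le_antisymm
    · rintro y ⟨t, rfl⟩
      have hPy : P (P t) = P t := hproj t
      obtain ⟨hfp1, hfp2⟩ := hfixabs (P t) hPy
      obtain ⟨c1, hc1⟩ := hscal _ hfp1 (posPart_nonneg _)
      obtain ⟨c2, hc2⟩ := hscal _ hfp2 (negPart_nonneg _)
      rw [Submodule.mem_span_singleton]
      refine ⟨c1 - c2, ?_⟩
      rw [sub_smul, ← hc1, ← hc2, posPart_sub_negPart]
    · rw [Submodule.span_le, Set.singleton_subset_iff]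
      exact ⟨|x₀|, rfl⟩
  rw [hrange, Module.rank_eq_one_iff_finrank_eq_one]
  exact finrank_span_singleton hu0.ne'
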